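/- Suppose the packing LP max{wᵀ·x : x ∈ P} with P = {x ∈ RBox(X) : A·x ≤ b} has a unique optimal solution x* satisfying x*_i ∈ {0, X_i} for every 1 ≤ i ≤ n. Then for every M-lift π: G̃ → G of the factor graph G, the lifted packing LP max{w̃ᵀ·x̃ : x̃ ∈ P̃}, where P̃ is the lifted feasible polytope, has the lift of x* (defined by x̃*_ṽ = x*_{π(ṽ)}) as its unique optimal solution, and c(P̃, w̃) = c(P, w). -/

import Mathlib

attribute [local instance] Classical.propDecidable

/-- A covering map of (simple) graphs: a graph homomorphism `π : G' → G` whose restriction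
to the neighbors of each vertex `v'` is a bijection onto the neighbors of `π v'`. -/
def IsGraphCoveringMap {V W : Type*} (G' : SimpleGraph V) (G : SimpleGraph W) (π : V → W) : Prop :=
  (∀ ⦃a b : V⦄, G'.Adj a b → G.Adj (π a) (π b)) ∧
  ∀ v : V, Set.BijOn π (G'.neighborSet v) (G.neighborSet (π v))

/-- The factor graph of the zero-one matrix `A`: a bipartite graph on variable vertices
`Fin n` (columns) and constraint vertices `Fin m` (rows), with an edge between `v_i` and
`C_j` iff `A j i = 1`. -/
def factorGraph {n m : ℕ} (A : Matrix (Fin m) (Fin n) ℝ) : SimpleGraph (Fin n ⊕ Fin m) where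
  Adj x y := (∃ i j, x = Sum.inl i ∧ y = Sum.inr j ∧ A j i = 1) ∨
             (∃ i j, x = Sum.inr j ∧ y = Sum.inl i ∧ A j i = 1)
  symm := by
    constructor
    rintro x y (⟨i, j, rfl, rfl, h⟩ | ⟨i, j, rfl, rfl, h⟩)
    · exact Or.inr ⟨i, j, rfl, rfl, h⟩
    · exact Or.inl ⟨i, j, rfl, rfl, h⟩
  loopless := by
    constructor
    rintro x (⟨i, j, h1, h2, -⟩ | ⟨i, j, h1, h2, -⟩) <;> subst h1 <;> simp_all

/-- **Observation A.3**: if the packing LP has a unique optimal solution `x*` with every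
coordinate on the boundary of the box (`x*_i ∈ {0, X_i}`), then for every `M`-lift of the
factor graph the lifted packing LP has the lift of `x*` as its unique optimal solution, and
`c(P̃, w̃) = c(P, w)`. -/
theorem lifted_LP_unique_opt_and_c_eq (n m : ℕ)
    (A : Matrix (Fin m) (Fin n) ℝ) (hA : ∀ j i, A j i = 0 ∨ A j i = 1)
    (b : Fin m → ℝ) (hb : ∀ j, 0 ≤ b j) (w : Fin n → ℝ) (X : Fin n → ℕ)
    (xstar : Fin n → ℝ)
    (hfeas : (∀ i, 0 ≤ xstar i ∧ xstar i ≤ (X i : ℝ)) ∧ ∀ j, (∑ i, A j i * xstar i) ≤ b j)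
    (hopt : ∀ y : Fin n → ℝ,
      ((∀ i, 0 ≤ y i ∧ y i ≤ (X i : ℝ)) ∧ ∀ j, (∑ i, A j i * y i) ≤ b j) →
      (∑ i, w i * y i) ≤ ∑ i, w i * xstar i)
    (huniq : ∀ y : Fin n → ℝ,
      ((∀ i, 0 ≤ y i ∧ y i ≤ (X i : ℝ)) ∧ ∀ j, (∑ i, A j i * y i) ≤ b j) →
      (∑ i, w i * y i) = (∑ i, w i * xstar i) → y = xstar)
    (hbdry : ∀ i, xstar i = 0 ∨ xstar i = (X i : ℝ))
    (V' : Type) [Finite V'] (M : ℕ) (hM : 1 ≤ M)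
    (G' : SimpleGraph V') (π : V' → Fin n ⊕ Fin m)
    (hcov : IsGraphCoveringMap G' (factorGraph A) π)
    (hfib : ∀ u : Fin n ⊕ Fin m, Nat.card (π ⁻¹' {u}) = M) :
    letI D := {v' : V' // ∃ i, π v' = Sum.inl i}
    letI wt : D → ℝ := fun v' => Sum.elim w (fun _ => 0) (π v'.1)
    letI Pt : Set (D → ℝ) :=
      {xt | (∀ (v' : D) (i), π v'.1 = Sum.inl i → 0 ≤ xt v' ∧ xt v' ≤ (X i : ℝ)) ∧
        ∀ (c' : V') (j), π c' = Sum.inr j →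
          (∑ᶠ u' : D, if G'.Adj c' u'.1 then xt u' else 0) ≤ b j}
    letI xstarLift : D → ℝ := fun v' => Sum.elim xstar (fun _ => 0) (π v'.1)
    xstarLift ∈ Pt ∧
    (∀ yt ∈ Pt, (∑ᶠ v' : D, wt v' * yt v') ≤ ∑ᶠ v' : D, wt v' * xstarLift v') ∧
    (∀ yt ∈ Pt, (∑ᶠ v' : D, wt v' * yt v') = (∑ᶠ v' : D, wt v' * xstarLift v') →
      yt = xstarLift) ∧
    sInf {c : ℝ | ∃ xt ∈ Pt, xt ≠ xstarLift ∧
        c = (∑ᶠ v' : D, wt v' * (xstarLift v' - xt v')) /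
            (∑ᶠ v' : D, |xstarLift v' - xt v'|)} =
      sInf {c : ℝ | ∃ x : Fin n → ℝ,
        ((∀ i, 0 ≤ x i ∧ x i ≤ (X i : ℝ)) ∧ ∀ j, (∑ i, A j i * x i) ≤ b j) ∧ x ≠ xstar ∧
        c = (∑ i, w i * (xstar i - x i)) / (∑ i, |xstar i - x i|)} := by
  classical
  haveI : Fintype V' := Fintype.ofFinite V'
  set D : Type := {v' : V' // ∃ i, π v' = Sum.inl i} with hD_def
  set wt : D → ℝ := fun v' => Sum.elim w (fun _ => 0) (π v'.1) with hwt_def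
  set Pt : Set (D → ℝ) :=
    {xt | (∀ (v' : D) (i), π v'.1 = Sum.inl i → 0 ≤ xt v' ∧ xt v' ≤ (X i : ℝ)) ∧
      ∀ (c' : V') (j), π c' = Sum.inr j →
        (∑ᶠ u' : D, if G'.Adj c' u'.1 then xt u' else 0) ≤ b j} with hPt_def
  set xstarLift : D → ℝ := fun v' => Sum.elim xstar (fun _ => 0) (π v'.1) with hxsl_def
  haveI hDfin : Fintype D := Subtype.fintype _
  have hMpos : (0:ℝ) < (M:ℝ) := by exact_mod_cast Nat.lt_of_lt_of_le Nat.zero_lt_one hM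
  have wt_def : ∀ v' : D, wt v' = Sum.elim w (fun _ => 0) (π v'.1) := fun _ => rfl
  have xsl_def : ∀ v' : D, xstarLift v' = Sum.elim xstar (fun _ => 0) (π v'.1) := fun _ => rfl
  set fib : (Fin n ⊕ Fin m) → Finset V' :=
    fun u => Finset.univ.filter (fun v' => π v' = u) with hfib_def
  have card_fib : ∀ u, (fib u).card = M := by
    intro u
    have h := hfib u
    rw [Nat.card_eq_fintype_card, ← Set.toFinset_card] at h
    rw [← h, hfib_def]
    congr 1
    ext v'
    simp
  have fib_ne : ∀ u, (fib u).Nonempty := by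
    intro u; rw [← Finset.card_pos, card_fib]; exact hM
  have adj_inr : ∀ (j : Fin m) (y), (factorGraph A).Adj (Sum.inr j) y ↔
      ∃ i, y = Sum.inl i ∧ A j i = 1 := by
    intro j y
    constructor
    · rintro (⟨i, j', h1, -, -⟩ | ⟨i, j', h1, h2, h3⟩)
      · exact absurd h1 (by simp)
      · obtain rfl : j' = j := by injection h1.symm
        exact ⟨i, h2, h3⟩
    · rintro ⟨i, rfl, h⟩
      exact Or.inr ⟨i, j, rfl, rfl, h⟩
  -- sums over neighbors of a constraint vertex
  have bij_sum : ∀ (c' : V') (F : Fin n ⊕ Fin m → ℝ),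
      ∑ u' ∈ G'.neighborFinset c', F (π u')
        = ∑ y ∈ (factorGraph A).neighborFinset (π c'), F y := by
    intro c' F
    refine Finset.sum_bij (fun u' _ => π u') ?_ ?_ ?_ ?_
    · intro a ha
      rw [SimpleGraph.mem_neighborFinset] at ha ⊢
      exact (hcov.2 c').mapsTo ha
    · intro a₁ ha₁ a₂ ha₂ h
      rw [SimpleGraph.mem_neighborFinset] at ha₁ ha₂
      exact (hcov.2 c').injOn ha₁ ha₂ h
    · intro y hy
      rw [SimpleGraph.mem_neighborFinset] at hy
      obtain ⟨a, haN, rfl⟩ := (hcov.2 c').surjOn hy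
      exact ⟨a, (SimpleGraph.mem_neighborFinset _ _ _).mpr haN, rfl⟩
    · intros; rfl
  have nbrFin_inr : ∀ j : Fin m, (factorGraph A).neighborFinset (Sum.inr j)
      = (Finset.univ.filter (fun i => A j i = 1)).image Sum.inl := by
    intro j
    ext y
    simp only [SimpleGraph.mem_neighborFinset, Finset.mem_image, Finset.mem_filter,
      Finset.mem_univ, true_and]
    rw [adj_inr]
    constructor
    · rintro ⟨i, rfl, h⟩; exact ⟨i, h, rfl⟩
    · rintro ⟨i, h, rfl⟩; exact ⟨i, rfl, h⟩
  have nbr_sum : ∀ (c' : V') (j : Fin m), π c' = Sum.inr j → ∀ (F : Fin n ⊕ Fin m → ℝ),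
      ∑ u' ∈ G'.neighborFinset c', F (π u') = ∑ i, A j i * F (Sum.inl i) := by
    intro c' j hc F
    rw [bij_sum, hc, nbrFin_inr, Finset.sum_image (by intro a _ b _ h; simpa using h),
      Finset.sum_filter]
    apply Finset.sum_congr rfl
    intro i _
    rcases hA j i with h | h <;> simp [h]
  -- extension of functions on D to V' by 0
  set extd : (D → ℝ) → V' → ℝ :=
    fun xt v' => if h : ∃ i, π v' = Sum.inl i then xt ⟨v', h⟩ else 0 with hext_def
  have ext_eq : ∀ (xt : D → ℝ) (v' : D), extd xt v'.1 = xt v' := by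
    intro xt v'
    simp only [hext_def]
    rw [dif_pos v'.2]
  have ext_zero : ∀ (xt : D → ℝ) (v' : V'), (¬ ∃ i, π v' = Sum.inl i) → extd xt v' = 0 := by
    intro xt v' h; simp only [hext_def]; rw [dif_neg h]
  -- sums over D
  have sumD : ∀ F : V' → ℝ, (∀ v', (¬ ∃ i, π v' = Sum.inl i) → F v' = 0) →
      (∑ᶠ v' : D, F v'.1) = ∑ v' : V', F v' := by
    intro F hF
    rw [finsum_eq_sum_of_fintype]
    rw [show (∑ v' : D, F v'.1)
        = ∑ v' ∈ Finset.univ.filter (fun v' : V' => ∃ i, π v' = Sum.inl i), F v' from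
      (Finset.sum_subtype _ (by simp) F).symm]
    exact Finset.sum_subset (Finset.filter_subset _ _)
      (fun x _ hx => hF x (by simpa using hx))
  have fib_union : ∀ F : V' → ℝ, (∀ v', (¬ ∃ i, π v' = Sum.inl i) → F v' = 0) →
      ∑ v' : V', F v' = ∑ i : Fin n, ∑ v' ∈ fib (Sum.inl i), F v' := by
    intro F hF
    rw [← Finset.sum_fiberwise Finset.univ π F, Fintype.sum_sum_type]
    have h0 : ∀ j : Fin m,
        ∑ v' ∈ Finset.univ.filter (fun v' => π v' = Sum.inr j), F v' = 0 := by
      intro j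
      apply Finset.sum_eq_zero
      intro v' hv'
      simp only [Finset.mem_filter] at hv'
      exact hF v' (by simp [hv'.2])
    simp [h0, hfib_def]
  have sumDfib : ∀ F : D → ℝ,
      (∑ᶠ v' : D, F v') = ∑ i : Fin n, ∑ v' ∈ fib (Sum.inl i), extd F v' := by
    intro F
    have h0 : ∀ v', (¬ ∃ i, π v' = Sum.inl i) → extd F v' = 0 := ext_zero F
    calc (∑ᶠ v' : D, F v') = ∑ᶠ v' : D, extd F v'.1 :=
          finsum_congr (fun v' => (ext_eq F v').symm)
      _ = ∑ v' : V', extd F v' := sumD _ h0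
      _ = _ := fib_union _ h0
  have ext_mem : ∀ yt : D → ℝ, yt ∈ Pt → ∀ (i : Fin n) (v' : V'), v' ∈ fib (Sum.inl i) →
      0 ≤ extd yt v' ∧ extd yt v' ≤ (X i : ℝ) := by
    intro yt hyt i v' hv'
    simp only [hfib_def, Finset.mem_filter] at hv'
    have h : ∃ i, π v' = Sum.inl i := ⟨i, hv'.2⟩
    have h2 := hyt.1 ⟨v', h⟩ i hv'.2
    simp only [hext_def]
    rw [dif_pos h]
    exact h2
  -- the average of a lifted point
  set avg : (D → ℝ) → (Fin n → ℝ) :=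
    fun yt i => (∑ v' ∈ fib (Sum.inl i), extd yt v') / M with havg_def
  have avg_sum : ∀ (yt : D → ℝ) (i : Fin n),
      ∑ v' ∈ fib (Sum.inl i), extd yt v' = M * avg yt i := by
    intro yt i
    simp only [havg_def]
    field_simp
  have avg_box : ∀ yt ∈ Pt, ∀ i, 0 ≤ avg yt i ∧ avg yt i ≤ (X i : ℝ) := by
    intro yt hyt i
    constructor
    · apply div_nonneg _ hMpos.le
      exact Finset.sum_nonneg fun v' hv' => (ext_mem yt hyt i v' hv').1
    · rw [div_le_iff₀ hMpos]
      calc ∑ v' ∈ fib (Sum.inl i), extd yt v'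
          ≤ ∑ _v' ∈ fib (Sum.inl i), (X i : ℝ) :=
            Finset.sum_le_sum fun v' hv' => (ext_mem yt hyt i v' hv').2
        _ = (X i : ℝ) * M := by rw [Finset.sum_const, card_fib, nsmul_eq_mul, mul_comm]
  -- the lifted constraint sum as a sum over neighbors
  have constr_eq : ∀ (yt : D → ℝ) (c' : V'), (∃ j, π c' = Sum.inr j) →
      (∑ᶠ u' : D, if G'.Adj c' u'.1 then yt u' else 0)
        = ∑ u' ∈ G'.neighborFinset c', extd yt u' := by
    rintro yt c' ⟨j, hc⟩
    have h1 : (∑ᶠ u' : D, if G'.Adj c' u'.1 then yt u' else 0)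
        = ∑ᶠ u' : D, (fun v' => if G'.Adj c' v' then extd yt v' else 0) u'.1 :=
      finsum_congr (fun u' => by simp only [ext_eq])
    have hz : ∀ v', (¬ ∃ i, π v' = Sum.inl i) →
        (fun v' => if G'.Adj c' v' then extd yt v' else 0) v' = 0 := by
      intro v' hv'
      by_cases hadj : G'.Adj c' v'
      · exfalso
        have h2 := hcov.1 hadj
        rw [hc, adj_inr] at h2
        obtain ⟨i, hi, -⟩ := h2
        exact hv' ⟨i, hi⟩
      · simp [hadj]
    rw [h1, sumD _ hz, SimpleGraph.neighborFinset_eq_filter, Finset.sum_filter]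
  -- perfect matching between fibers
  have ecard : ∀ (j : Fin m) (u' : V'),
      ((fib (Sum.inr j)).filter (fun c' => G'.Adj c' u')).card
        = if ∃ i, π u' = Sum.inl i ∧ A j i = 1 then 1 else 0 := by
    intro j u'
    split_ifs with h
    · obtain ⟨i, hu, hAji⟩ := h
      rw [Finset.card_eq_one]
      have hmem : Sum.inr j ∈ (factorGraph A).neighborSet (π u') := by
        rw [hu]
        exact Or.inl ⟨i, j, rfl, rfl, hAji⟩
      obtain ⟨c', hc'N, hc'π⟩ := (hcov.2 u').surjOn hmem
      refine ⟨c', ?_⟩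
      ext d'
      simp only [Finset.mem_filter, hfib_def, Finset.mem_univ, true_and,
        Finset.mem_singleton]
      constructor
      · rintro ⟨hdπ, hdadj⟩
        have hd'N : d' ∈ G'.neighborSet u' := hdadj.symm
        exact (hcov.2 u').injOn hd'N hc'N (by rw [hdπ, hc'π])
      · rintro rfl
        have h5 : G'.Adj u' d' := hc'N
        exact ⟨hc'π, h5.symm⟩
    · rw [Finset.card_eq_zero, Finset.filter_eq_empty_iff]
      intro c' hc'
      simp only [hfib_def, Finset.mem_filter, Finset.mem_univ, true_and] at hc'
      intro hadj
      have h2 := hcov.1 hadj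
      rw [hc', adj_inr] at h2
      obtain ⟨i, hi, hAi⟩ := h2
      exact h ⟨i, hi, hAi⟩
  have double : ∀ (f : V' → ℝ) (j : Fin m),
      ∑ c' ∈ fib (Sum.inr j), ∑ u' ∈ G'.neighborFinset c', f u'
        = ∑ i, A j i * ∑ v' ∈ fib (Sum.inl i), f v' := by
    intro f j
    have h1 : ∀ c' : V', ∑ u' ∈ G'.neighborFinset c', f u'
        = ∑ u' : V', if G'.Adj c' u' then f u' else 0 := by
      intro c'; rw [SimpleGraph.neighborFinset_eq_filter, Finset.sum_filter]
    rw [Finset.sum_congr rfl (fun c' _ => h1 c'), Finset.sum_comm]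
    have h2 : ∀ u' : V', ∑ c' ∈ fib (Sum.inr j), (if G'.Adj c' u' then f u' else 0)
        = (if ∃ i, π u' = Sum.inl i ∧ A j i = 1 then (1:ℝ) else 0) * f u' := by
      intro u'
      rw [← Finset.sum_filter, Finset.sum_const, ecard j u']
      split_ifs <;> simp
    rw [Finset.sum_congr rfl (fun u' _ => h2 u')]
    have h3 : ∑ u' : V', (if ∃ i, π u' = Sum.inl i ∧ A j i = 1 then (1:ℝ) else 0) * f u'
        = ∑ i, ∑ v' ∈ fib (Sum.inl i),
            (fun u' => (if ∃ i, π u' = Sum.inl i ∧ A j i = 1 then (1:ℝ) else 0) * f u') v' :=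
      fib_union _ (fun v' hv' => by
        rw [if_neg, zero_mul]
        rintro ⟨i, hi, -⟩
        exact hv' ⟨i, hi⟩)
    rw [h3]
    apply Finset.sum_congr rfl
    intro i _
    rcases hA j i with h | h
    · rw [h, zero_mul]
      apply Finset.sum_eq_zero
      intro v' hv'
      simp only [hfib_def, Finset.mem_filter, Finset.mem_univ, true_and] at hv'
      beta_reduce
      rw [if_neg, zero_mul]
      rintro ⟨i', hi', hA'⟩
      rw [hv'] at hi'
      obtain rfl : i = i' := by injection hi'
      rw [h] at hA'
      norm_num at hA'
    · rw [h, one_mul]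
      apply Finset.sum_congr rfl
      intro v' hv'
      simp only [hfib_def, Finset.mem_filter, Finset.mem_univ, true_and] at hv'
      beta_reduce
      rw [if_pos (show ∃ i', π v' = Sum.inl i' ∧ A j i' = 1 from ⟨i, hv', h⟩), one_mul]
  have avg_feas : ∀ yt ∈ Pt,
      (∀ i, 0 ≤ avg yt i ∧ avg yt i ≤ (X i : ℝ)) ∧ ∀ j, (∑ i, A j i * avg yt i) ≤ b j := by
    intro yt hyt
    refine ⟨avg_box yt hyt, ?_⟩
    intro j
    have key : ∑ c' ∈ fib (Sum.inr j), ∑ u' ∈ G'.neighborFinset c', extd yt u'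
        ≤ M * b j := by
      calc ∑ c' ∈ fib (Sum.inr j), ∑ u' ∈ G'.neighborFinset c', extd yt u'
          ≤ ∑ _c' ∈ fib (Sum.inr j), b j := by
            apply Finset.sum_le_sum
            intro c' hc'
            simp only [hfib_def, Finset.mem_filter, Finset.mem_univ, true_and] at hc'
            have h6 := hyt.2 c' j hc'
            rwa [constr_eq yt c' ⟨j, hc'⟩] at h6
        _ = M * b j := by rw [Finset.sum_const, card_fib, nsmul_eq_mul]
    rw [double] at key
    have key2 : (M:ℝ) * ∑ i, A j i * avg yt i ≤ M * b j := by
      rw [Finset.mul_sum]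
      calc ∑ i, (M:ℝ) * (A j i * avg yt i)
          = ∑ i, A j i * ∑ v' ∈ fib (Sum.inl i), extd yt v' := by
            apply Finset.sum_congr rfl
            intro i _
            rw [avg_sum]
            ring
        _ ≤ M * b j := key
    exact le_of_mul_le_mul_left key2 hMpos
  -- the weighted objective of a lifted point
  have wtot : ∀ yt : D → ℝ, (∑ᶠ v' : D, wt v' * yt v') = M * ∑ i, w i * avg yt i := by
    intro yt
    rw [sumDfib (fun v' => wt v' * yt v'), Finset.mul_sum]
    apply Finset.sum_congr rfl
    intro i _
    have h2 : ∀ v' ∈ fib (Sum.inl i),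
        extd (fun v' => wt v' * yt v') v' = w i * extd yt v' := by
      intro v' hv'
      simp only [hfib_def, Finset.mem_filter, Finset.mem_univ, true_and] at hv'
      have h : ∃ i, π v' = Sum.inl i := ⟨i, hv'⟩
      simp only [hext_def]
      rw [dif_pos h, dif_pos h, wt_def]
      simp [hv']
    rw [Finset.sum_congr rfl h2, ← Finset.mul_sum, avg_sum]
    ring
  -- lifting a point of the base polytope
  set lift : (Fin n → ℝ) → (D → ℝ) :=
    fun x v' => Sum.elim x (fun _ => 0) (π v'.1) with hlift_def
  have lift_xstar : lift xstar = xstarLift := rfl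
  have ext_lift : ∀ (x : Fin n → ℝ) (i : Fin n), ∀ v' ∈ fib (Sum.inl i),
      extd (lift x) v' = x i := by
    intro x i v' hv'
    simp only [hfib_def, Finset.mem_filter, Finset.mem_univ, true_and] at hv'
    have h : ∃ i, π v' = Sum.inl i := ⟨i, hv'⟩
    simp only [hext_def]
    rw [dif_pos h]
    simp only [hlift_def]
    rw [hv']
    simp
  have avg_lift : ∀ x : Fin n → ℝ, avg (lift x) = x := by
    intro x
    funext i
    simp only [havg_def]
    rw [Finset.sum_congr rfl (ext_lift x i), Finset.sum_const, card_fib, nsmul_eq_mul]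
    field_simp
  have avg_xsl : avg xstarLift = xstar := by rw [← lift_xstar]; exact avg_lift xstar
  have lift_mem : ∀ x : Fin n → ℝ,
      ((∀ i, 0 ≤ x i ∧ x i ≤ (X i : ℝ)) ∧ ∀ j, (∑ i, A j i * x i) ≤ b j) →
      lift x ∈ Pt := by
    intro x hx
    constructor
    · intro v' i hv'
      simp only [hlift_def]
      rw [hv']
      simpa using hx.1 i
    · intro c' j hc
      rw [constr_eq (lift x) c' ⟨j, hc⟩]
      have hel : ∀ u' : V', extd (lift x) u' = Sum.elim x (fun _ => 0) (π u') := by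
        intro u'
        by_cases h : ∃ i, π u' = Sum.inl i
        · simp only [hext_def]
          rw [dif_pos h]
        · obtain ⟨j', hj'⟩ : ∃ j', π u' = Sum.inr j' := by
            cases hπ : π u' with
            | inl i => exact absurd ⟨i, hπ⟩ h
            | inr j' => exact ⟨j', rfl⟩
          simp only [hext_def]
          rw [dif_neg h, hj']
          simp
      rw [Finset.sum_congr rfl (fun u' _ => hel u'), nbr_sum c' j hc]
      simpa using hx.2 j
  -- boundary forcing
  have force : ∀ yt ∈ Pt, avg yt = xstar → yt = xstarLift := by
    intro yt hyt h
    funext v'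
    obtain ⟨i, hi⟩ := v'.2
    have hvfib : v'.1 ∈ fib (Sum.inl i) := by
      simp only [hfib_def, Finset.mem_filter, Finset.mem_univ, true_and]
      exact hi
    have hxl : xstarLift v' = xstar i := by rw [xsl_def, hi]; simp
    rw [hxl]
    have hsum : ∑ u' ∈ fib (Sum.inl i), extd yt u' = M * xstar i := by
      rw [avg_sum, h]
    have hbox := fun u' hu' => ext_mem yt hyt i u' hu'
    have hval : extd yt v'.1 = xstar i := by
      rcases hbdry i with h0 | hX
      · rw [h0, mul_zero] at hsum
        rw [h0]
        exact (Finset.sum_eq_zero_iff_of_nonneg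
          (fun u' hu' => (hbox u' hu').1)).mp hsum v'.1 hvfib
      · rw [hX] at hsum
        rw [hX]
        have hz : ∑ u' ∈ fib (Sum.inl i), ((X i : ℝ) - extd yt u') = 0 := by
          rw [Finset.sum_sub_distrib, hsum, Finset.sum_const, card_fib, nsmul_eq_mul]
          ring
        have h7 := (Finset.sum_eq_zero_iff_of_nonneg
          (fun u' hu' => sub_nonneg.mpr (hbox u' hu').2)).mp hz v'.1 hvfib
        linarith [h7]
    rw [← hval, ext_eq]
  -- optimality and uniqueness over the lifted polytope
  have opt : ∀ yt ∈ Pt, (∑ᶠ v' : D, wt v' * yt v') ≤ ∑ᶠ v' : D, wt v' * xstarLift v' := by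
    intro yt hyt
    rw [wtot, wtot, avg_xsl]
    exact mul_le_mul_of_nonneg_left (hopt _ (avg_feas yt hyt)) hMpos.le
  have uniq : ∀ yt ∈ Pt,
      (∑ᶠ v' : D, wt v' * yt v') = (∑ᶠ v' : D, wt v' * xstarLift v') → yt = xstarLift := by
    intro yt hyt heq
    rw [wtot, wtot, avg_xsl] at heq
    have h2 : ∑ i, w i * avg yt i = ∑ i, w i * xstar i :=
      mul_left_cancel₀ (ne_of_gt hMpos) heq
    exact force yt hyt (huniq _ (avg_feas yt hyt) h2)
  -- numerator and denominator identities
  have num_eq : ∀ yt : D → ℝ, (∑ᶠ v' : D, wt v' * (xstarLift v' - yt v'))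
      = M * ∑ i, w i * (xstar i - avg yt i) := by
    intro yt
    have h1 : (∑ᶠ v' : D, wt v' * (xstarLift v' - yt v'))
        = (∑ᶠ v' : D, wt v' * xstarLift v') - ∑ᶠ v' : D, wt v' * yt v' := by
      rw [finsum_eq_sum_of_fintype, finsum_eq_sum_of_fintype, finsum_eq_sum_of_fintype,
        ← Finset.sum_sub_distrib]
      exact Finset.sum_congr rfl fun v' _ => by ring
    rw [h1, wtot, wtot, avg_xsl, ← mul_sub, ← Finset.sum_sub_distrib]
    congr 1
    exact Finset.sum_congr rfl fun i _ => by ring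
  have den_eq : ∀ yt ∈ Pt, (∑ᶠ v' : D, |xstarLift v' - yt v'|)
      = M * ∑ i, |xstar i - avg yt i| := by
    intro yt hyt
    rw [sumDfib (fun v' => |xstarLift v' - yt v'|), Finset.mul_sum]
    apply Finset.sum_congr rfl
    intro i _
    have habs : ∀ v' ∈ fib (Sum.inl i),
        extd (fun v' => |xstarLift v' - yt v'|) v' = |xstar i - extd yt v'| := by
      intro v' hv'
      simp only [hfib_def, Finset.mem_filter, Finset.mem_univ, true_and] at hv'
      have h : ∃ i, π v' = Sum.inl i := ⟨i, hv'⟩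
      simp only [hext_def]
      rw [dif_pos h, dif_pos h, xsl_def]
      simp [hv']
    rw [Finset.sum_congr rfl habs]
    rcases hbdry i with h0 | hX
    · rw [h0]
      have hz : ∀ v' ∈ fib (Sum.inl i), |(0:ℝ) - extd yt v'| = extd yt v' := by
        intro v' hv'
        rw [zero_sub, abs_neg, abs_of_nonneg (ext_mem yt hyt i v' hv').1]
      rw [Finset.sum_congr rfl hz, avg_sum, zero_sub, abs_neg,
        abs_of_nonneg (avg_box yt hyt i).1]
    · rw [hX]
      have hz : ∀ v' ∈ fib (Sum.inl i), |(X i:ℝ) - extd yt v'| = (X i:ℝ) - extd yt v' :=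
        fun v' hv' => abs_of_nonneg (sub_nonneg.mpr (ext_mem yt hyt i v' hv').2)
      rw [Finset.sum_congr rfl hz, Finset.sum_sub_distrib, Finset.sum_const, card_fib,
        nsmul_eq_mul, avg_sum, abs_of_nonneg (sub_nonneg.mpr (avg_box yt hyt i).2)]
      ring
  have lift_ne : ∀ x : Fin n → ℝ, x ≠ xstar → lift x ≠ xstarLift := by
    intro x hx hcontra
    apply hx
    funext i
    obtain ⟨v', hv'⟩ := fib_ne (Sum.inl i)
    simp only [hfib_def, Finset.mem_filter, Finset.mem_univ, true_and] at hv'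
    have h := congrFun hcontra ⟨v', ⟨i, hv'⟩⟩
    rw [xsl_def] at h
    simp only [hlift_def] at h
    rw [show π ((⟨v', ⟨i, hv'⟩⟩ : D) : V') = Sum.inl i from hv'] at h
    simpa using h
  -- equality of the two sets of ratios
  have setEq : {c : ℝ | ∃ xt ∈ Pt, xt ≠ xstarLift ∧
        c = (∑ᶠ v' : D, wt v' * (xstarLift v' - xt v')) /
            (∑ᶠ v' : D, |xstarLift v' - xt v'|)}
      = {c : ℝ | ∃ x : Fin n → ℝ,
        ((∀ i, 0 ≤ x i ∧ x i ≤ (X i : ℝ)) ∧ ∀ j, (∑ i, A j i * x i) ≤ b j) ∧ x ≠ xstar ∧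
        c = (∑ i, w i * (xstar i - x i)) / (∑ i, |xstar i - x i|)} := by
    ext c
    simp only [Set.mem_setOf_eq]
    constructor
    · rintro ⟨yt, hyt, hne, rfl⟩
      refine ⟨avg yt, avg_feas yt hyt, fun h => hne (force yt hyt h), ?_⟩
      rw [num_eq, den_eq yt hyt, mul_div_mul_left _ _ (ne_of_gt hMpos)]
    · rintro ⟨x, hx, hne, rfl⟩
      refine ⟨lift x, lift_mem x hx, lift_ne x hne, ?_⟩
      rw [num_eq, den_eq (lift x) (lift_mem x hx), avg_lift,
        mul_div_mul_left _ _ (ne_of_gt hMpos)]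
  have xsl_mem : xstarLift ∈ Pt := lift_xstar ▸ lift_mem xstar hfeas
  exact ⟨xsl_mem, opt, uniq, congrArg sInf setEq⟩
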